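/- arXiv:1310.7536 — 4 statements merged into one kernel-verified Lean document; each statement's English description precedes it below -/
import Mathlib

section
/- If C' ⊆ {0,1,2}^m is a single-error-correcting code for the channel 𝒯, then C = 𝔖^m(C') ⊆ {0,1}^{2m} satisfies Δ(x,y) ≥ 2 for all distinct x, y ∈ C, i.e., C is a 1-code of length 2m for the binary asymmetric channel. -/
/-- `N(x,y) = Σᵢ max(yᵢ - xᵢ, 0)` for binary words viewed in `ℤⁿ`. -/
def Nasym {n : ℕ} (x y : Fin n → Fin 2) : ℤ :=
  ∑ i, max (((y i : ℕ) : ℤ) - ((x i : ℕ) : ℤ)) 0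

/-- The asymmetric distance `Δ(x,y) = max(N(x,y), N(y,x))`. -/
def Dasym {n : ℕ} (x y : Fin n → Fin 2) : ℤ :=
  max (Nasym x y) (Nasym y x)

/-- The map `𝔖̃` on a binary pair: `00 ↦ 0`, `11 ↦ 0`, `01 ↦ 1`, `10 ↦ 2`. -/
def Stilde2 (p : Fin 2 × Fin 2) : Fin 3 :=
  if p.1 = p.2 then 0 else if p.1 = 0 then 1 else 2

/-- `𝔖` sends a ternary symbol `t` to the set of binary pairs mapping to it under `𝔖̃`. -/
def Sset (t : Fin 3) : Set (Fin 2 × Fin 2) := {p | Stilde2 p = t}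

/-- Membership `u ∈ 𝔖^m(c)`. -/
def Smem {m : ℕ} (c : Fin m → Fin 3) (u : Fin (2 * m) → Fin 2) : Prop :=
  ∀ j : Fin m,
    (u ⟨2 * (j : ℕ), by have := j.isLt; omega⟩,
     u ⟨2 * (j : ℕ) + 1, by have := j.isLt; omega⟩) ∈ Sset (c j)

/-- The single-symbol transitions of the ternary channel `𝒯`:
`1 → 0`, `0 → 1`, `0 → 2`, `2 → 0`. -/
def Ttrans (a b : Fin 3) : Prop :=
  (a = 1 ∧ b = 0) ∨ (a = 0 ∧ b = 1) ∨ (a = 0 ∧ b = 2) ∨ (a = 2 ∧ b = 0)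

/-- The `𝒯`-ball of `c`: words obtained from `c` by applying a `𝒯`-transition in at
most one coordinate (including `c` itself). -/
def TBall {m : ℕ} (c : Fin m → Fin 3) : Set (Fin m → Fin 3) :=
  {d | d = c ∨ ∃ i, Ttrans (c i) (d i) ∧ ∀ j, j ≠ i → d j = c j}

/- ---------- auxiliary material ---------- -/

instance (a b : Fin 3) : Decidable (Ttrans a b) := by unfold Ttrans; infer_instance

lemma term_eq : ∀ a b : Fin 2,
    max (((b:ℕ):ℤ) - ((a:ℕ):ℤ)) 0 = if a = 0 ∧ b = 1 then (1:ℤ) else 0 := by decide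

lemma Nasym_card {n : ℕ} (x y : Fin n → Fin 2) :
    Nasym x y = ((Finset.univ.filter (fun i => x i = 0 ∧ y i = 1)).card : ℤ) := by
  unfold Nasym
  rw [Finset.sum_congr rfl (fun i _ => term_eq (x i) (y i)), Finset.sum_boole]

lemma fin2_ne : ∀ a b : Fin 2, a ≠ b → (a = 0 ∧ b = 1) ∨ (a = 1 ∧ b = 0) := by decide

lemma L1 : ∀ p q : Fin 2 × Fin 2, p ≠ q → (p.1 = q.1 ∨ p.2 = q.2) →
    Ttrans (Stilde2 p) (Stilde2 q) ∧ Ttrans (Stilde2 q) (Stilde2 p) ∧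
      Stilde2 p ≠ Stilde2 q := by decide

lemma L2 : ∀ p q : Fin 2 × Fin 2, p.1 ≠ q.1 → p.2 ≠ q.2 → p.1 ≠ p.2 →
    (∃ t, Ttrans (Stilde2 p) t ∧ Ttrans (Stilde2 q) t) ∧ Stilde2 p ≠ Stilde2 q := by decide

/-- The first index of block `j`. -/
def idxA {m : ℕ} (j : Fin m) : Fin (2*m) := ⟨2*(j:ℕ), by have := j.isLt; omega⟩
/-- The second index of block `j`. -/
def idxB {m : ℕ} (j : Fin m) : Fin (2*m) := ⟨2*(j:ℕ)+1, by have := j.isLt; omega⟩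

lemma idxA_val {m : ℕ} (j : Fin m) : ((idxA j : Fin (2*m)) : ℕ) = 2*(j:ℕ) := rfl
lemma idxB_val {m : ℕ} (j : Fin m) : ((idxB j : Fin (2*m)) : ℕ) = 2*(j:ℕ)+1 := rfl

lemma pairx {m : ℕ} {c : Fin m → Fin 3} {x : Fin (2*m) → Fin 2}
    (hx : Smem c x) (j : Fin m) : Stilde2 (x (idxA j), x (idxB j)) = c j := hx j

lemma block_eq {m : ℕ} {c c' : Fin m → Fin 3} {x y : Fin (2*m) → Fin 2}
    (hx : Smem c x) (hy : Smem c' y) (j : Fin m)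
    (h1 : x (idxA j) = y (idxA j)) (h2 : x (idxB j) = y (idxB j)) : c' j = c j := by
  rw [← pairx hx j, ← pairx hy j, h1, h2]

lemma block_trans {m : ℕ} {c c' : Fin m → Fin 3} {x y : Fin (2*m) → Fin 2}
    (hx : Smem c x) (hy : Smem c' y) (j : Fin m)
    (hne : x (idxA j) ≠ y (idxA j) ∨ x (idxB j) ≠ y (idxB j))
    (heq : x (idxA j) = y (idxA j) ∨ x (idxB j) = y (idxB j)) :
    Ttrans (c j) (c' j) ∧ Ttrans (c' j) (c j) ∧ c j ≠ c' j := by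
  have hp := pairx hx j
  have hq := pairx hy j
  have hpq : (x (idxA j), x (idxB j)) ≠ (y (idxA j), y (idxB j)) := by
    rcases hne with h | h
    · exact fun hh => h (congrArg Prod.fst hh)
    · exact fun hh => h (congrArg Prod.snd hh)
  have := L1 (x (idxA j), x (idxB j)) (y (idxA j), y (idxB j)) hpq heq
  rw [hp, hq] at this
  exact this

lemma block_two {m : ℕ} {c c' : Fin m → Fin 3} {x y : Fin (2*m) → Fin 2}
    (hx : Smem c x) (hy : Smem c' y) (j : Fin m)
    (h1 : x (idxA j) ≠ y (idxA j)) (h2 : x (idxB j) ≠ y (idxB j))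
    (h3 : x (idxA j) ≠ x (idxB j)) :
    (∃ t, Ttrans (c j) t ∧ Ttrans (c' j) t) ∧ c j ≠ c' j := by
  have hp := pairx hx j
  have hq := pairx hy j
  have := L2 (x (idxA j), x (idxB j)) (y (idxA j), y (idxB j)) h1 h2 h3
  rw [hp, hq] at this
  exact this

/-- If `C' ⊆ {0,1,2}^m` is single-error-correcting for the channel `𝒯` (pairwise disjoint
`𝒯`-balls), then `C = 𝔖^m(C')` is a `1`-code of length `2m`: `Δ(x,y) ≥ 2` for all
distinct `x, y ∈ C`. -/
theorem image_of_T_sec_is_one_code (m : ℕ) (C' : Set (Fin m → Fin 3))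
    (hsec : ∀ c ∈ C', ∀ c' ∈ C', c ≠ c' → Disjoint (TBall c) (TBall c')) :
    ∀ x y : Fin (2 * m) → Fin 2,
      (∃ c ∈ C', Smem c x) → (∃ c ∈ C', Smem c y) → x ≠ y →
      2 ≤ Dasym x y := by
  rintro x y ⟨c, hc, hx⟩ ⟨c', hc', hy⟩ hne
  by_contra hcon
  push_neg at hcon
  unfold Dasym at hcon
  have h1 : Nasym x y ≤ 1 := by
    have := le_max_left (Nasym x y) (Nasym y x); omega
  have h2 : Nasym y x ≤ 1 := by
    have := le_max_right (Nasym x y) (Nasym y x); omega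
  have cA : (Finset.univ.filter (fun i => x i = 0 ∧ y i = 1)).card ≤ 1 := by
    rw [Nasym_card x y] at h1; exact_mod_cast h1
  have cB : (Finset.univ.filter (fun i => y i = 0 ∧ x i = 1)).card ≤ 1 := by
    rw [Nasym_card y x] at h2; exact_mod_cast h2
  have hA : ∀ i i' : Fin (2*m), (x i = 0 ∧ y i = 1) → (x i' = 0 ∧ y i' = 1) → i = i' := by
    intro i i' hi hi'
    exact Finset.card_le_one.mp cA i (by simp [Finset.mem_filter, hi.1, hi.2])
      i' (by simp [Finset.mem_filter, hi'.1, hi'.2])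
  have hB : ∀ i i' : Fin (2*m), (x i = 1 ∧ y i = 0) → (x i' = 1 ∧ y i' = 0) → i = i' := by
    intro i i' hi hi'
    exact Finset.card_le_one.mp cB i (by simp [Finset.mem_filter, hi.1, hi.2])
      i' (by simp [Finset.mem_filter, hi'.1, hi'.2])
  have key : ∀ d : Fin m → Fin 3, d ∈ TBall c → d ∈ TBall c' → c ≠ c' → False :=
    fun d hd1 hd2 hcc => Set.disjoint_left.mp (hsec c hc c' hc' hcc) hd1 hd2
  obtain ⟨i0, hi0⟩ := Function.ne_iff.mp hne
  by_cases hex : ∃ i1 i2 : Fin (2 * m), (x i1 = 0 ∧ y i1 = 1) ∧ (x i2 = 1 ∧ y i2 = 0)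
  · obtain ⟨i1, i2, hi1, hi2⟩ := hex
    have hne1 : x i1 ≠ y i1 := by rw [hi1.1, hi1.2]; decide
    have hne2 : x i2 ≠ y i2 := by rw [hi2.1, hi2.2]; decide
    have hne12 : i1 ≠ i2 := by
      intro h; rw [h, hi2.1] at hi1; exact absurd hi1.1 (by decide)
    have hD : ∀ i, x i ≠ y i → i = i1 ∨ i = i2 := by
      intro i h
      rcases fin2_ne _ _ h with h' | h'
      · exact Or.inl (hA i i1 h' hi1)
      · exact Or.inr (hB i i2 h' hi2)
    have hm1 := i1.isLt
    have hm2 := i2.isLt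
    by_cases hjj : (i1:ℕ)/2 = (i2:ℕ)/2
    · -- same block
      set j : Fin m := ⟨(i1:ℕ)/2, by omega⟩ with hjdef
      have hjv : (j:ℕ) = (i1:ℕ)/2 := by rw [hjdef]
      have vne : (i1:ℕ) ≠ (i2:ℕ) := fun h => hne12 (Fin.ext h)
      have hrest : ∀ k, k ≠ j → c' k = c k := by
        intro k hk
        refine block_eq hx hy k ?_ ?_
        · by_contra hh
          rcases hD _ hh with h | h <;>
            (have := congrArg Fin.val h; rw [idxA_val] at this; exact hk (Fin.ext (by omega)))
        · by_contra hh
          rcases hD _ hh with h | h <;>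
            (have := congrArg Fin.val h; rw [idxB_val] at this; exact hk (Fin.ext (by omega)))
      have hmain : (∃ t, Ttrans (c j) t ∧ Ttrans (c' j) t) ∧ c j ≠ c' j := by
        have hcase : ((i1:ℕ) = 2*((i1:ℕ)/2) ∧ (i2:ℕ) = 2*((i1:ℕ)/2)+1)
                   ∨ ((i1:ℕ) = 2*((i1:ℕ)/2)+1 ∧ (i2:ℕ) = 2*((i1:ℕ)/2)) := by omega
        rcases hcase with ⟨e1, e2⟩ | ⟨e1, e2⟩
        · have ea : i1 = idxA j := Fin.ext (by rw [idxA_val]; omega)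
          have eb : i2 = idxB j := Fin.ext (by rw [idxB_val]; omega)
          rw [ea] at hi1; rw [eb] at hi2
          exact block_two hx hy j (by rw [hi1.1, hi1.2]; decide)
            (by rw [hi2.1, hi2.2]; decide) (by rw [hi1.1, hi2.1]; decide)
        · have ea : i1 = idxB j := Fin.ext (by rw [idxB_val]; omega)
          have eb : i2 = idxA j := Fin.ext (by rw [idxA_val]; omega)
          rw [ea] at hi1; rw [eb] at hi2
          exact block_two hx hy j (by rw [hi2.1, hi2.2]; decide)
            (by rw [hi1.1, hi1.2]; decide) (by rw [hi2.1, hi1.1]; decide)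
      obtain ⟨⟨t, T1, T2⟩, tne⟩ := hmain
      have hcc : c ≠ c' := fun h => tne (by rw [h])
      have mem1 : Function.update c j t ∈ TBall c := by
        refine Or.inr ⟨j, ?_, ?_⟩
        · rw [Function.update_self]; exact T1
        · intro k hk; exact Function.update_of_ne hk _ _
      have mem2 : Function.update c j t ∈ TBall c' := by
        refine Or.inr ⟨j, ?_, ?_⟩
        · rw [Function.update_self]; exact T2
        · intro k hk; rw [Function.update_of_ne hk]; exact (hrest k hk).symm
      exact key _ mem1 mem2 hcc
    · -- different blocks
      set j1 : Fin m := ⟨(i1:ℕ)/2, by omega⟩ with hj1def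
      set j2 : Fin m := ⟨(i2:ℕ)/2, by omega⟩ with hj2def
      have hjv1 : (j1:ℕ) = (i1:ℕ)/2 := by rw [hj1def]
      have hjv2 : (j2:ℕ) = (i2:ℕ)/2 := by rw [hj2def]
      have hjne : j1 ≠ j2 := fun h => hjj (by rw [← hjv1, ← hjv2, h])
      have hb1 : Ttrans (c j1) (c' j1) ∧ Ttrans (c' j1) (c j1) ∧ c j1 ≠ c' j1 := by
        have hpar : (i1:ℕ) = 2*((i1:ℕ)/2) ∨ (i1:ℕ) = 2*((i1:ℕ)/2)+1 := by omega
        rcases hpar with e | e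
        · have ea : i1 = idxA j1 := Fin.ext (by rw [idxA_val]; omega)
          have hob : x (idxB j1) = y (idxB j1) := by
            by_contra hh
            rcases hD _ hh with h | h <;>
              (have := congrArg Fin.val h; rw [idxB_val] at this; omega)
          exact block_trans hx hy j1 (Or.inl (by rw [← ea]; exact hne1)) (Or.inr hob)
        · have ea : i1 = idxB j1 := Fin.ext (by rw [idxB_val]; omega)
          have hoa : x (idxA j1) = y (idxA j1) := by
            by_contra hh
            rcases hD _ hh with h | h <;>
              (have := congrArg Fin.val h; rw [idxA_val] at this; omega)
          exact block_trans hx hy j1 (Or.inr (by rw [← ea]; exact hne1)) (Or.inl hoa)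
      have hb2 : Ttrans (c j2) (c' j2) ∧ Ttrans (c' j2) (c j2) ∧ c j2 ≠ c' j2 := by
        have hpar : (i2:ℕ) = 2*((i2:ℕ)/2) ∨ (i2:ℕ) = 2*((i2:ℕ)/2)+1 := by omega
        rcases hpar with e | e
        · have ea : i2 = idxA j2 := Fin.ext (by rw [idxA_val]; omega)
          have hob : x (idxB j2) = y (idxB j2) := by
            by_contra hh
            rcases hD _ hh with h | h <;>
              (have := congrArg Fin.val h; rw [idxB_val] at this; omega)
          exact block_trans hx hy j2 (Or.inl (by rw [← ea]; exact hne2)) (Or.inr hob)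
        · have ea : i2 = idxB j2 := Fin.ext (by rw [idxB_val]; omega)
          have hoa : x (idxA j2) = y (idxA j2) := by
            by_contra hh
            rcases hD _ hh with h | h <;>
              (have := congrArg Fin.val h; rw [idxA_val] at this; omega)
          exact block_trans hx hy j2 (Or.inr (by rw [← ea]; exact hne2)) (Or.inl hoa)
      have hrest : ∀ k, k ≠ j1 → k ≠ j2 → c' k = c k := by
        intro k hk1 hk2
        refine block_eq hx hy k ?_ ?_
        · by_contra hh
          rcases hD _ hh with h | h
          · have := congrArg Fin.val h; rw [idxA_val] at this
            exact hk1 (Fin.ext (by omega))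
          · have := congrArg Fin.val h; rw [idxA_val] at this
            exact hk2 (Fin.ext (by omega))
        · by_contra hh
          rcases hD _ hh with h | h
          · have := congrArg Fin.val h; rw [idxB_val] at this
            exact hk1 (Fin.ext (by omega))
          · have := congrArg Fin.val h; rw [idxB_val] at this
            exact hk2 (Fin.ext (by omega))
      obtain ⟨T1, -, tne1⟩ := hb1
      obtain ⟨-, T2, -⟩ := hb2
      have hcc : c ≠ c' := fun h => tne1 (by rw [h])
      have mem1 : Function.update c j1 (c' j1) ∈ TBall c := by
        refine Or.inr ⟨j1, ?_, ?_⟩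
        · rw [Function.update_self]; exact T1
        · intro k hk; exact Function.update_of_ne hk _ _
      have mem2 : Function.update c j1 (c' j1) ∈ TBall c' := by
        refine Or.inr ⟨j2, ?_, ?_⟩
        · rw [Function.update_of_ne (Ne.symm hjne)]; exact T2
        · intro k hk
          by_cases hk1 : k = j1
          · subst hk1; rw [Function.update_self]
          · rw [Function.update_of_ne hk1]; exact (hrest k hk1 hk).symm
      exact key _ mem1 mem2 hcc
  · -- single differing coordinate
    have hD : ∀ i, x i ≠ y i → i = i0 := by
      intro i h
      rcases fin2_ne _ _ h with h' | h' <;> rcases fin2_ne _ _ hi0 with h0 | h0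
      · exact hA i i0 h' h0
      · exact absurd ⟨i, i0, h', h0⟩ hex
      · exact absurd ⟨i0, i, h0, h'⟩ hex
      · exact hB i i0 h' h0
    have hm0 := i0.isLt
    set j : Fin m := ⟨(i0:ℕ)/2, by omega⟩ with hjdef
    have hjv : (j:ℕ) = (i0:ℕ)/2 := by rw [hjdef]
    have hbt : Ttrans (c j) (c' j) ∧ Ttrans (c' j) (c j) ∧ c j ≠ c' j := by
      have hpar : (i0:ℕ) = 2*((i0:ℕ)/2) ∨ (i0:ℕ) = 2*((i0:ℕ)/2)+1 := by omega
      rcases hpar with e | e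
      · have ea : i0 = idxA j := Fin.ext (by rw [idxA_val]; omega)
        have hob : x (idxB j) = y (idxB j) := by
          by_contra hh
          have := congrArg Fin.val (hD _ hh); rw [idxB_val] at this; omega
        exact block_trans hx hy j (Or.inl (by rw [← ea]; exact hi0)) (Or.inr hob)
      · have ea : i0 = idxB j := Fin.ext (by rw [idxB_val]; omega)
        have hoa : x (idxA j) = y (idxA j) := by
          by_contra hh
          have := congrArg Fin.val (hD _ hh); rw [idxA_val] at this; omega
        exact block_trans hx hy j (Or.inr (by rw [← ea]; exact hi0)) (Or.inl hoa)
    have hrest : ∀ k, k ≠ j → c' k = c k := by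
      intro k hk
      refine block_eq hx hy k ?_ ?_
      · by_contra hh
        have := congrArg Fin.val (hD _ hh); rw [idxA_val] at this
        exact hk (Fin.ext (by omega))
      · by_contra hh
        have := congrArg Fin.val (hD _ hh); rw [idxB_val] at this
        exact hk (Fin.ext (by omega))
    obtain ⟨T1, -, tne⟩ := hbt
    have hcc : c ≠ c' := fun h => tne (by rw [h])
    exact key c' (Or.inr ⟨j, T1, hrest⟩) (Or.inl rfl) hcc
end

section
/- If C' ⊆ {0,1,2}^m is a ternary code of minimum Hamming distance at least 3, then C = 𝔖^m(C') ⊆ {0,1}^{2m} satisfies Δ(x,y) ≥ 2 for all distinct x, y ∈ C, i.e., C is a 1-code of length 2m for the binary asymmetric channel. -/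
lemma fin2_cases (a : Fin 2) : a = 0 ∨ a = 1 := by revert a; decide

lemma Nasym_nonneg {n : ℕ} (x y : Fin n → Fin 2) : 0 ≤ Nasym x y :=
  Finset.sum_nonneg fun i _ => le_max_right _ _

lemma Nasym_add {n : ℕ} (x y : Fin n → Fin 2) :
    Nasym x y + Nasym y x = (hammingDist x y : ℤ) := by
  unfold Nasym
  rw [← Finset.sum_add_distrib, hammingDist, Finset.card_filter]
  push_cast
  apply Finset.sum_congr rfl
  intro i _
  rcases fin2_cases (x i) with h | h <;> rcases fin2_cases (y i) with h' | h' <;>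
    simp [h, h'] <;> norm_num

lemma two_le_Nasym {n : ℕ} (x y : Fin n → Fin 2) (i0 i1 : Fin n) (hne : i0 ≠ i1)
    (hx0 : x i0 = 0) (hy0 : y i0 = 1) (hx1 : x i1 = 0) (hy1 : y i1 = 1) :
    2 ≤ Nasym x y := by
  have h := Finset.sum_le_sum_of_subset_of_nonneg
    (Finset.subset_univ ({i0, i1} : Finset (Fin n)))
    (fun i _ _ => le_max_right (((y i : ℕ) : ℤ) - ((x i : ℕ) : ℤ)) 0)
  rw [Finset.sum_pair hne] at h
  simp only [hx0, hy0, hx1, hy1] at h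
  unfold Nasym
  norm_num at h
  convert h using 1

lemma pair_analysis (a b a' b' : Fin 2) (heq : Stilde2 (a, b) = Stilde2 (a', b'))
    (hne : (a, b) ≠ (a', b')) :
    (a = 0 ∧ b = 0 ∧ a' = 1 ∧ b' = 1) ∨ (a = 1 ∧ b = 1 ∧ a' = 0 ∧ b' = 0) := by
  revert heq hne; revert a b a' b'; decide

/-- If `C' ⊆ {0,1,2}^m` has minimum Hamming distance at least 3, then `C = 𝔖^m(C')` is a
`1`-code of length `2m`: `Δ(x,y) ≥ 2` for all distinct `x, y ∈ C`. -/
theorem image_of_dist3_is_one_code (m : ℕ) (C' : Set (Fin m → Fin 3))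
    (hdist : ∀ c ∈ C', ∀ c' ∈ C', c ≠ c' → 3 ≤ hammingDist c c') :
    ∀ x y : Fin (2 * m) → Fin 2,
      (∃ c ∈ C', Smem c x) → (∃ c ∈ C', Smem c y) → x ≠ y →
      2 ≤ Dasym x y := by
  rintro x y ⟨c, hc, hx⟩ ⟨c', hc', hy⟩ hxy
  -- block index functions
  have ha0lt : ∀ j : Fin m, 2 * (j : ℕ) < 2 * m := fun j => by have := j.isLt; omega
  have ha1lt : ∀ j : Fin m, 2 * (j : ℕ) + 1 < 2 * m := fun j => by have := j.isLt; omega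
  set a0 : Fin m → Fin (2 * m) := fun j => ⟨2 * (j : ℕ), ha0lt j⟩ with ha0
  set a1 : Fin m → Fin (2 * m) := fun j => ⟨2 * (j : ℕ) + 1, ha1lt j⟩ with ha1
  have hxs : ∀ j, Stilde2 (x (a0 j), x (a1 j)) = c j := fun j => hx j
  have hys : ∀ j, Stilde2 (y (a0 j), y (a1 j)) = c' j := fun j => hy j
  by_cases hcc : c = c'
  · -- same codeword: differ only inside a 0-block, contributing 2 to one side
    subst hcc
    obtain ⟨i, hi⟩ := Function.ne_iff.mp hxy
    have hjlt : (i : ℕ) / 2 < m := by have := i.isLt; omega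
    set j : Fin m := ⟨(i : ℕ) / 2, hjlt⟩ with hj
    have heq : Stilde2 (x (a0 j), x (a1 j)) = Stilde2 (y (a0 j), y (a1 j)) :=
      (hxs j).trans (hys j).symm
    have hine : (x (a0 j), x (a1 j)) ≠ (y (a0 j), y (a1 j)) := by
      have hcase : i = a0 j ∨ i = a1 j := by
        have : (i : ℕ) = 2 * ((i : ℕ) / 2) ∨ (i : ℕ) = 2 * ((i : ℕ) / 2) + 1 := by omega
        rcases this with h | h
        · left; apply Fin.ext; simp [ha0, hj, ← h]
        · right; apply Fin.ext; simp [ha1, hj, ← h]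
      intro hp
      have h1 : x (a0 j) = y (a0 j) := congrArg Prod.fst hp
      have h2 : x (a1 j) = y (a1 j) := congrArg Prod.snd hp
      rcases hcase with h | h <;> rw [h] at hi
      · exact hi h1
      · exact hi h2
    have hne01 : a0 j ≠ a1 j := by
      intro h
      have := congrArg Fin.val h
      simp [ha0, ha1] at this
    rcases pair_analysis _ _ _ _ heq hine with ⟨h1, h2, h3, h4⟩ | ⟨h1, h2, h3, h4⟩
    · exact le_trans (two_le_Nasym x y (a0 j) (a1 j) hne01 h1 h3 h2 h4) (le_max_left _ _)
    · exact le_trans (two_le_Nasym y x (a0 j) (a1 j) hne01 h3 h1 h4 h2) (le_max_right _ _)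
  · -- different codewords: Hamming distance of x, y is at least 3
    have h3 : 3 ≤ hammingDist c c' := hdist c hc c' hc' hcc
    have hle : hammingDist c c' ≤ hammingDist x y := by
      unfold hammingDist
      apply Finset.card_le_card_of_injOn
        (fun j => if x (a0 j) ≠ y (a0 j) then a0 j else a1 j)
      · intro j hj
        simp only [Finset.mem_coe, Finset.mem_filter, Finset.mem_univ, true_and] at hj ⊢
        by_cases h : x (a0 j) = y (a0 j)
        · simp only [h, ne_eq, not_true_eq_false, if_false]
          intro h'
          exact hj (((hxs j).symm.trans (by rw [h, h'])).trans (hys j))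
        · simpa [h] using h
      · intro j _ j' _ hjj'
        have hv : ∀ k : Fin m,
            (((if x (a0 k) ≠ y (a0 k) then a0 k else a1 k) : Fin (2 * m)) : ℕ) = 2 * (k : ℕ) ∨
            (((if x (a0 k) ≠ y (a0 k) then a0 k else a1 k) : Fin (2 * m)) : ℕ) = 2 * (k : ℕ) + 1 := by
          intro k
          by_cases h : x (a0 k) = y (a0 k) <;> simp [h] <;> simp [ha0, ha1]
        have := congrArg Fin.val hjj'
        rcases hv j with h | h <;> rcases hv j' with h' | h' <;>
          (apply Fin.ext; simp only at this; omega)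
    have hsum := Nasym_add x y
    have h1 := Nasym_nonneg x y
    have h2 := Nasym_nonneg y x
    have hcast : (3 : ℤ) ≤ (hammingDist x y : ℤ) := by exact_mod_cast le_trans h3 hle
    unfold Dasym
    rcases le_total (Nasym x y) (Nasym y x) with h | h
    · rw [max_eq_right h]; omega
    · rw [max_eq_left h]; omega
end

section
/- Let C' ⊆ {0,1} × {0,1,2}^m and for (b,c) ∈ {0,1} × {0,1,2}^m let its 𝒵×𝒯^m-ball consist of all words obtained by applying at most one transition in at most one coordinate, where in the first coordinate only the transition 1→0 is allowed and in each of the remaining m coordinates the 𝒯-transitions 1→0, 0→1, 0→2, 2→0 are allowed. If these balls are pairwise disjoint for the codewords of C' (C' is single-error-correcting for the channel 𝒵×𝒯^m), then C = {(b,u) ∈ {0,1}^{2m+1} : (b,c) ∈ C' and u ∈ 𝔖^m(c)} satisfies Δ(x,y) ≥ 2 for all distinct x, y ∈ C, i.e., C is a 1-code of length 2m+1. -/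
/-- The `𝒵 × 𝒯^m`-ball of a word `w = (b, c) ∈ {0,1} × {0,1,2}^m`: words obtained from `w`
by applying at most one transition in at most one coordinate, where in the first (binary)
coordinate only `1 → 0` is allowed and in the ternary coordinates the `𝒯`-transitions
are allowed. -/
def ZTBall {m : ℕ} (w : Fin 2 × (Fin m → Fin 3)) : Set (Fin 2 × (Fin m → Fin 3)) :=
  {d | d = w ∨
       (w.1 = 1 ∧ d.1 = 0 ∧ d.2 = w.2) ∨
       (d.1 = w.1 ∧ ∃ i, Ttrans (w.2 i) (d.2 i) ∧ ∀ j, j ≠ i → d.2 j = w.2 j)}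

namespace OneCodeAux

def idx0 {m : ℕ} (j : Fin m) : Fin (2 * m) := ⟨2 * (j : ℕ), by have := j.isLt; omega⟩
def idx1 {m : ℕ} (j : Fin m) : Fin (2 * m) := ⟨2 * (j : ℕ) + 1, by have := j.isLt; omega⟩

def pN (p q : Fin 2 × Fin 2) : ℤ :=
  max (((q.1 : ℕ) : ℤ) - ((p.1 : ℕ) : ℤ)) 0 + max (((q.2 : ℕ) : ℤ) - ((p.2 : ℕ) : ℤ)) 0

lemma pN_nonneg (p q : Fin 2 × Fin 2) : 0 ≤ pN p q :=
  add_nonneg (le_max_right _ _) (le_max_right _ _)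

def pairEquiv (m : ℕ) : Fin m × Fin 2 ≃ Fin (2 * m) where
  toFun p := ⟨2 * (p.1 : ℕ) + (p.2 : ℕ), by have := p.1.isLt; have := p.2.isLt; omega⟩
  invFun i := (⟨(i : ℕ) / 2, by have := i.isLt; omega⟩, ⟨(i : ℕ) % 2, by omega⟩)
  left_inv := by
    rintro ⟨⟨j, hj⟩, ⟨k, hk⟩⟩
    simp only [Prod.mk.injEq]
    constructor <;> apply Fin.ext <;> simp <;> omega
  right_inv := by
    rintro ⟨i, hi⟩
    apply Fin.ext
    simp
    omega

lemma sum_split (m : ℕ) (f : Fin (2 * m) → ℤ) :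
    ∑ i, f i = ∑ j : Fin m, (f (idx0 j) + f (idx1 j)) := by
  rw [← Equiv.sum_comp (pairEquiv m) f, Fintype.sum_prod_type]
  refine Finset.sum_congr rfl fun j _ => ?_
  rw [Fin.sum_univ_two]
  congr 1

lemma L1 : ∀ p q : Fin 2 × Fin 2, Stilde2 p = Stilde2 q → pN p q ≤ 1 → pN q p ≤ 1 → p = q := by decide

lemma L2 : ∀ p q : Fin 2 × Fin 2, Stilde2 p ≠ Stilde2 q → 1 ≤ pN p q + pN q p := by decide

lemma L3 : ∀ p q : Fin 2 × Fin 2,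
    ((Stilde2 p = 1 ∧ Stilde2 q = 2) ∨ (Stilde2 p = 2 ∧ Stilde2 q = 1)) →
    2 ≤ pN p q + pN q p := by decide

lemma T_bidir : ∀ t t' : Fin 3, t ≠ t' → ¬((t = 1 ∧ t' = 2) ∨ (t = 2 ∧ t' = 1)) →
    Ttrans t t' ∧ Ttrans t' t := by simp only [Ttrans]; decide

lemma T_to_zero : ∀ t : Fin 3, t ≠ 0 → Ttrans t 0 := by simp only [Ttrans]; decide

lemma mem_ball_self {m : ℕ} (w : Fin 2 × (Fin m → Fin 3)) : w ∈ ZTBall w := Or.inl rfl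

lemma mem_ball_Z {m : ℕ} (c : Fin m → Fin 3) : ((0 : Fin 2), c) ∈ ZTBall (1, c) :=
  Or.inr (Or.inl ⟨rfl, rfl, rfl⟩)

lemma mem_ball_T {m : ℕ} (b : Fin 2) (c d : Fin m → Fin 3) (j0 : Fin m)
    (h : Ttrans (c j0) (d j0) ∨ d j0 = c j0) (hoff : ∀ j, j ≠ j0 → d j = c j) :
    (b, d) ∈ ZTBall (b, c) := by
  rcases h with h | h
  · exact Or.inr (Or.inr ⟨rfl, j0, h, hoff⟩)
  · refine Or.inl ?_
    have hd : d = c := funext fun j => by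
      by_cases hj : j = j0
      · subst hj; exact h
      · exact hoff j hj
    rw [hd]

lemma Ndecomp {m : ℕ} (b b' : Fin 2) (u v : Fin (2 * m) → Fin 2) :
    Nasym (Fin.cons b u) (Fin.cons b' v) =
      max (((b' : ℕ) : ℤ) - ((b : ℕ) : ℤ)) 0 +
        ∑ j : Fin m, pN (u (idx0 j), u (idx1 j)) (v (idx0 j), v (idx1 j)) := by
  unfold Nasym
  rw [Fin.sum_univ_succ]
  simp only [Fin.cons_zero, Fin.cons_succ]
  rw [sum_split]
  rfl

end OneCodeAux

open OneCodeAux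

/-- If `C' ⊆ {0,1} × {0,1,2}^m` is single-error-correcting for the channel `𝒵 × 𝒯^m`
(pairwise disjoint balls), then the binary code
`C = {(b,u) : (b,c) ∈ C', u ∈ 𝔖^m(c)} ⊆ {0,1}^{2m+1}` is a `1`-code of length `2m+1`:
`Δ(x,y) ≥ 2` for all distinct `x, y ∈ C`. -/
theorem image_of_ZT_sec_is_one_code (m : ℕ) (C' : Set (Fin 2 × (Fin m → Fin 3)))
    (hsec : ∀ w ∈ C', ∀ w' ∈ C', w ≠ w' → Disjoint (ZTBall w) (ZTBall w')) :
    ∀ x y : Fin (2 * m + 1) → Fin 2,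
      (∃ w ∈ C', ∃ u : Fin (2 * m) → Fin 2, Smem w.2 u ∧ x = Fin.cons w.1 u) →
      (∃ w ∈ C', ∃ u : Fin (2 * m) → Fin 2, Smem w.2 u ∧ y = Fin.cons w.1 u) →
      x ≠ y → 2 ≤ Dasym x y := by
  rintro x y ⟨⟨b, c⟩, hw, u, hu, rfl⟩ ⟨⟨b', c'⟩, hw', v, hv, rfl⟩ hxy
  dsimp only at hu hv hxy ⊢
  by_contra hlt
  push_neg at hlt
  unfold Dasym at hlt
  -- pair functions
  set P : Fin m → Fin 2 × Fin 2 := fun j => (u (idx0 j), u (idx1 j)) with hPdef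
  set Q : Fin m → Fin 2 × Fin 2 := fun j => (v (idx0 j), v (idx1 j)) with hQdef
  have hSu : ∀ j, Stilde2 (P j) = c j := fun j => hu j
  have hSv : ∀ j, Stilde2 (Q j) = c' j := fun j => hv j
  -- bounds from Dasym < 2
  have hmax := max_lt_iff.mp hlt
  have hA : Nasym (Fin.cons b u) (Fin.cons b' v) ≤ 1 := by
    have := hmax.1; omega
  have hB : Nasym (Fin.cons b' v) (Fin.cons b u) ≤ 1 := by
    have := hmax.2; omega
  rw [Ndecomp] at hA hB
  have ha0 : ∀ j, 0 ≤ pN (P j) (Q j) := fun j => pN_nonneg _ _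
  have hb0 : ∀ j, 0 ≤ pN (Q j) (P j) := fun j => pN_nonneg _ _
  have hg0 : ∀ j, 0 ≤ pN (P j) (Q j) + pN (Q j) (P j) := fun j => add_nonneg (ha0 j) (hb0 j)
  have hg1 : ∀ j, c j ≠ c' j → 1 ≤ pN (P j) (Q j) + pN (Q j) (P j) := fun j h =>
    L2 _ _ (by rw [hSu, hSv]; exact h)
  have hg2 : ∀ j, ((c j = 1 ∧ c' j = 2) ∨ (c j = 2 ∧ c' j = 1)) →
      2 ≤ pN (P j) (Q j) + pN (Q j) (P j) := fun j h =>
    L3 _ _ (by rw [hSu, hSv]; exact h)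
  have hαnn : (0 : ℤ) ≤ max (((b' : ℕ) : ℤ) - ((b : ℕ) : ℤ)) 0 := le_max_right _ _
  have hβnn : (0 : ℤ) ≤ max (((b : ℕ) : ℤ) - ((b' : ℕ) : ℤ)) 0 := le_max_right _ _
  have hsumg : ∑ j, (pN (P j) (Q j) + pN (Q j) (P j)) ≤
      2 - max (((b' : ℕ) : ℤ) - ((b : ℕ) : ℤ)) 0 - max (((b : ℕ) : ℤ) - ((b' : ℕ) : ℤ)) 0 := by
    rw [Finset.sum_add_distrib]; linarith
  have hsub : ∀ S : Finset (Fin m),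
      ∑ j ∈ S, (pN (P j) (Q j) + pN (Q j) (P j)) ≤
        ∑ j, (pN (P j) (Q j) + pN (Q j) (P j)) := fun S =>
    Finset.sum_le_sum_of_subset_of_nonneg (Finset.subset_univ S) (fun j _ _ => hg0 j)
  have hww : ∀ z : Fin 2 × (Fin m → Fin 3), z ∈ ZTBall (b, c) → z ∈ ZTBall (b', c') →
      b = b' ∧ c = c' := by
    intro z h1 h2
    by_cases he : ((b, c) : Fin 2 × (Fin m → Fin 3)) = (b', c')
    · exact ⟨congrArg Prod.fst he, congrArg Prod.snd he⟩
    · exact absurd h2 (Set.disjoint_left.mp (hsec _ hw _ hw' he) h1)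
  by_cases hbb : b = b'
  · -- first coordinate equal
    subst hbb
    have hα : max (((b : ℕ) : ℤ) - ((b : ℕ) : ℤ)) 0 = 0 := by simp
    rw [hα, zero_add] at hA hB
    rw [hα] at hsumg
    have haj : ∀ j, pN (P j) (Q j) ≤ 1 := fun j =>
      le_trans (Finset.single_le_sum (fun i _ => ha0 i) (Finset.mem_univ j)) hA
    have hbj : ∀ j, pN (Q j) (P j) ≤ 1 := fun j =>
      le_trans (Finset.single_le_sum (fun i _ => hb0 i) (Finset.mem_univ j)) hB
    by_cases hcc : c = c'
    · -- all equal ⇒ x = y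
      apply hxy
      have huv : u = v := by
        have hPQ : ∀ j, P j = Q j := fun j =>
          L1 _ _ (by rw [hSu, hSv, hcc]) (haj j) (hbj j)
        funext i
        have hi2 := i.isLt
        have hcase : i = idx0 ⟨(i : ℕ) / 2, by omega⟩ ∨ i = idx1 ⟨(i : ℕ) / 2, by omega⟩ := by
          have h2 : (i : ℕ) % 2 = 0 ∨ (i : ℕ) % 2 = 1 := by omega
          rcases h2 with h2 | h2
          · exact Or.inl (Fin.ext (by simp [idx0]; omega))
          · exact Or.inr (Fin.ext (by simp [idx1]; omega))
        rcases hcase with h | h <;> rw [h]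
        · exact congrArg Prod.fst (hPQ _)
        · exact congrArg Prod.snd (hPQ _)
      rw [huv]
    · -- c ≠ c'
      obtain ⟨j0, hj0⟩ := Function.ne_iff.mp hcc
      by_cases hone : ∀ j, j ≠ j0 → c j = c' j
      · -- single differing coordinate: common point (b, update c j0 0)
        set d : Fin m → Fin 3 := Function.update c j0 0 with hd
        have hz1 : ((b, d) : Fin 2 × (Fin m → Fin 3)) ∈ ZTBall (b, c) := by
          refine mem_ball_T b c d j0 ?_ (fun j hj => Function.update_of_ne hj _ _)
          by_cases h0 : c j0 = 0
          · exact Or.inr (by rw [hd, Function.update_self, h0])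
          · exact Or.inl (by rw [hd, Function.update_self]; exact T_to_zero _ h0)
        have hz2 : ((b, d) : Fin 2 × (Fin m → Fin 3)) ∈ ZTBall (b, c') := by
          refine mem_ball_T b c' d j0 ?_ (fun j hj => by
            rw [hd, Function.update_of_ne hj]; exact hone j hj)
          by_cases h0 : c' j0 = 0
          · exact Or.inr (by rw [hd, Function.update_self, h0])
          · exact Or.inl (by rw [hd, Function.update_self]; exact T_to_zero _ h0)
        exact hj0 (congrFun (hww _ hz1 hz2).2 j0)
      · -- two differing coordinates
        push_neg at hone
        obtain ⟨j1, hj1ne, hj1⟩ := hone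
        have hpair : ∀ jA jB : Fin m, jA ≠ jB → c jA ≠ c' jA → c jB ≠ c' jB →
            pN (P jA) (Q jA) + pN (Q jA) (P jA) +
              (pN (P jB) (Q jB) + pN (Q jB) (P jB)) ≤ 2 := by
          intro jA jB hne hA' hB'
          have := hsub {jA, jB}
          rw [Finset.sum_pair hne] at this
          linarith
        have hnot12 : ∀ jA jB : Fin m, jA ≠ jB → c jA ≠ c' jA → c jB ≠ c' jB →
            ¬((c jA = 1 ∧ c' jA = 2) ∨ (c jA = 2 ∧ c' jA = 1)) := by
          intro jA jB hne hA' hB' h12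
          have := hpair jA jB hne hA' hB'
          have := hg2 jA h12
          have := hg1 jB hB'
          linarith
        have hT0 := T_bidir (c j0) (c' j0) hj0 (hnot12 j0 j1 (Ne.symm hj1ne) hj0 hj1)
        have hT1 := T_bidir (c j1) (c' j1) hj1 (hnot12 j1 j0 hj1ne hj1 hj0)
        -- no third differing coordinate
        have hthird : ∀ j, j ≠ j0 → j ≠ j1 → c j = c' j := by
          intro j hj hj'
          by_contra hne
          have hsub3 := hsub {j0, j1, j}
          have hmem : j0 ∉ ({j1, j} : Finset (Fin m)) := by
            simp only [Finset.mem_insert, Finset.mem_singleton]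
            push_neg
            exact ⟨Ne.symm hj1ne, Ne.symm hj⟩
          rw [Finset.sum_insert hmem, Finset.sum_pair (Ne.symm hj')] at hsub3
          have h1 := hg1 j0 hj0
          have h2 := hg1 j1 hj1
          have h3 := hg1 j hne
          linarith
        set d : Fin m → Fin 3 := Function.update c j0 (c' j0) with hd
        have hz1 : ((b, d) : Fin 2 × (Fin m → Fin 3)) ∈ ZTBall (b, c) := by
          refine mem_ball_T b c d j0 ?_ (fun j hj => Function.update_of_ne hj _ _)
          exact Or.inl (by rw [hd, Function.update_self]; exact hT0.1)
        have hz2 : ((b, d) : Fin 2 × (Fin m → Fin 3)) ∈ ZTBall (b, c') := by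
          refine mem_ball_T b c' d j1 ?_ ?_
          · refine Or.inl ?_
            rw [hd, Function.update_of_ne hj1ne]
            exact hT1.2
          · intro j hj
            by_cases hj' : j = j0
            · subst hj'; rw [hd, Function.update_self]
            · rw [hd, Function.update_of_ne hj']
              exact hthird j hj' hj
        exact hj0 (congrFun (hww _ hz1 hz2).2 j0)
  · -- b ≠ b'
    have hbv : ((b : ℕ) = 0 ∧ (b' : ℕ) = 1) ∨ ((b : ℕ) = 1 ∧ (b' : ℕ) = 0) := by
      have h1 := b.isLt
      have h2 := b'.isLt
      have h3 : (b : ℕ) ≠ (b' : ℕ) := fun h => hbb (Fin.ext h)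
      omega
    have hαβ : max (((b' : ℕ) : ℤ) - ((b : ℕ) : ℤ)) 0 +
        max (((b : ℕ) : ℤ) - ((b' : ℕ) : ℤ)) 0 = 1 := by
      rcases hbv with ⟨h1, h2⟩ | ⟨h1, h2⟩ <;> rw [h1, h2] <;> norm_num
    have hsumg1 : ∑ j, (pN (P j) (Q j) + pN (Q j) (P j)) ≤ 1 := by linarith
    -- at most one differing ternary coordinate
    have honediff : ∀ jA jB : Fin m, c jA ≠ c' jA → c jB ≠ c' jB → jA = jB := by
      intro jA jB hA' hB'
      by_contra hne
      have := hsub {jA, jB}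
      rw [Finset.sum_pair hne] at this
      have h1 := hg1 jA hA'
      have h2 := hg1 jB hB'
      linarith
    by_cases hcc : c = c'
    · subst hcc
      rcases hbv with ⟨h1, h2⟩ | ⟨h1, h2⟩
      · -- b = 0, b' = 1 : w = (0,c) ∈ ball w, and ∈ ball (1,c) via Z
        have hb0 : b = 0 := Fin.ext h1
        have hb1 : b' = 1 := Fin.ext h2
        subst hb0; subst hb1
        exact hbb ((hww _ (mem_ball_self _) (mem_ball_Z c)).1)
      · have hb1 : b = 1 := Fin.ext h1
        have hb0 : b' = 0 := Fin.ext h2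
        subst hb1; subst hb0
        exact hbb ((hww _ (mem_ball_Z c) (mem_ball_self _)).1)
    · obtain ⟨j0, hj0⟩ := Function.ne_iff.mp hcc
      have hone : ∀ j, j ≠ j0 → c j = c' j := by
        intro j hj
        by_contra hne
        exact hj (honediff j j0 hne hj0)
      -- exclude {1,2} at j0
      have hnot12 : ¬((c j0 = 1 ∧ c' j0 = 2) ∨ (c j0 = 2 ∧ c' j0 = 1)) := by
        intro h12
        have h2 := hg2 j0 h12
        have h3 := Finset.single_le_sum (fun i (_ : i ∈ Finset.univ) => hg0 i) (Finset.mem_univ j0)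
        linarith
      have hT := T_bidir (c j0) (c' j0) hj0 hnot12
      rcases hbv with ⟨h1, h2⟩ | ⟨h1, h2⟩
      · -- b = 0, b' = 1 : z = (0, c')
        have hb0 : b = 0 := Fin.ext h1
        have hb1 : b' = 1 := Fin.ext h2
        subst hb0; subst hb1
        have hz1 : ((0 : Fin 2), c') ∈ ZTBall ((0 : Fin 2), c) := by
          refine mem_ball_T 0 c c' j0 (Or.inl hT.1) ?_
          intro j hj; exact (hone j hj).symm
        have hz2 : ((0 : Fin 2), c') ∈ ZTBall ((1 : Fin 2), c') := mem_ball_Z c'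
        exact hbb (hww _ hz1 hz2).1
      · have hb1 : b = 1 := Fin.ext h1
        have hb0 : b' = 0 := Fin.ext h2
        subst hb1; subst hb0
        have hz1 : ((0 : Fin 2), c) ∈ ZTBall ((1 : Fin 2), c) := mem_ball_Z c
        have hz2 : ((0 : Fin 2), c) ∈ ZTBall ((0 : Fin 2), c') := by
          refine mem_ball_T 0 c' c j0 (Or.inl hT.2) hone
        exact hbb (hww _ hz1 hz2).1
end

section
/- Let C'₀, C'₁ ⊆ {0,1,2}^m each be single-error-correcting codes for the channel 𝒯, and suppose that for every c₀ ∈ C'₀ and c₁ ∈ C'₁ one has c₁ ∉ B_𝒯(c₀) and c₀ ∉ B_𝒯(c₁) (in particular c₀ ≠ c₁). Then C = {(0,u) : c ∈ C'₀, u ∈ 𝔖^m(c)} ∪ {(1,u) : c ∈ C'₁, u ∈ 𝔖^m(c)} ⊆ {0,1}^{2m+1} satisfies Δ(x,y) ≥ 2 for all distinct x, y ∈ C, i.e., C is a 1-code of length 2m+1 for the binary asymmetric channel. -/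
-- AUX

lemma fin2_eq : ∀ a b : Fin 2, ¬(a = 0 ∧ b = 1) → ¬(a = 1 ∧ b = 0) → a = b := by decide

lemma ttrans_ne : ∀ a b : Fin 3, Ttrans a b → a ≠ b := by unfold Ttrans; decide

lemma ttrans_symm : ∀ a b : Fin 3, Ttrans a b → Ttrans b a := by unfold Ttrans; decide

lemma ttrans_of_flip : ∀ p q : Fin 2 × Fin 2,
    ((p.1 = q.1 ∧ p.2 ≠ q.2) ∨ (p.1 ≠ q.1 ∧ p.2 = q.2)) →
    Ttrans (Stilde2 p) (Stilde2 q) := by unfold Ttrans; decide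

lemma max_term : ∀ a b : Fin 2,
    max (((b : ℕ) : ℤ) - ((a : ℕ) : ℤ)) 0 = if a = 0 ∧ b = 1 then 1 else 0 := by decide

lemma Nasym_eq_card {n : ℕ} (u v : Fin n → Fin 2) :
    Nasym u v = ((Finset.univ.filter (fun i => u i = 0 ∧ v i = 1)).card : ℤ) := by
  unfold Nasym
  simp_rw [max_term]
  rw [Finset.sum_boole]

def idx1 {m : ℕ} (j : Fin m) : Fin (2 * m) := ⟨2 * (j : ℕ), by have := j.isLt; omega⟩
def idx2 {m : ℕ} (j : Fin m) : Fin (2 * m) := ⟨2 * (j : ℕ) + 1, by have := j.isLt; omega⟩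

lemma smem_eq {m : ℕ} {c : Fin m → Fin 3} {u : Fin (2 * m) → Fin 2}
    (h : Smem c u) (j : Fin m) : Stilde2 (u (idx1 j), u (idx2 j)) = c j := h j

lemma pair_eq {m : ℕ} {c c' : Fin m → Fin 3} {u v : Fin (2 * m) → Fin 2}
    (hu : Smem c u) (hv : Smem c' v) (j : Fin m)
    (h : ∀ i : Fin (2 * m), (i : ℕ) / 2 = (j : ℕ) → u i = v i) : c j = c' j := by
  rw [← smem_eq hu j, ← smem_eq hv j,
    h (idx1 j) (by show 2 * (j : ℕ) / 2 = (j : ℕ); omega),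
    h (idx2 j) (by show (2 * (j : ℕ) + 1) / 2 = (j : ℕ); omega)]

lemma ttrans_at {m : ℕ} {c c' : Fin m → Fin 3} {u v : Fin (2 * m) → Fin 2}
    (hu : Smem c u) (hv : Smem c' v) (a : Fin (2 * m)) (j : Fin m)
    (hj : (a : ℕ) / 2 = (j : ℕ)) (hne : u a ≠ v a)
    (hoth : ∀ i : Fin (2 * m), i ≠ a → (i : ℕ) / 2 = (j : ℕ) → u i = v i) :
    Ttrans (c j) (c' j) := by
  rw [← smem_eq hu j, ← smem_eq hv j]
  apply ttrans_of_flip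
  have hcase : (a : ℕ) = 2 * (j : ℕ) ∨ (a : ℕ) = 2 * (j : ℕ) + 1 := by omega
  rcases hcase with h | h
  · have ha : idx1 j = a := Fin.ext (by simp [idx1, h])
    right
    refine ⟨by rw [ha]; exact hne, ?_⟩
    exact hoth (idx2 j) (fun he => by
        have : (idx2 j : ℕ) = (a : ℕ) := congrArg Fin.val he
        simp [idx2] at this; omega)
      (by show (2 * (j : ℕ) + 1) / 2 = (j : ℕ); omega)
  · have ha : idx2 j = a := Fin.ext (by simp [idx2, h])
    left
    refine ⟨?_, by rw [ha]; exact hne⟩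
    exact hoth (idx1 j) (fun he => by
        have : (idx1 j : ℕ) = (a : ℕ) := congrArg Fin.val he
        simp [idx1] at this; omega)
      (by show 2 * (j : ℕ) / 2 = (j : ℕ); omega)

lemma oneflip {m : ℕ} {c c' : Fin m → Fin 3} {u v : Fin (2 * m) → Fin 2}
    (hu : Smem c u) (hv : Smem c' v) (a : Fin (2 * m))
    (hne : u a ≠ v a) (h : ∀ i, i ≠ a → u i = v i) :
    c ≠ c' ∧ c' ∈ TBall c := by
  have haj : (a : ℕ) / 2 < m := by have := a.isLt; omega
  set j0 : Fin m := ⟨(a : ℕ) / 2, haj⟩ with hj0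
  have hval : (j0 : ℕ) = (a : ℕ) / 2 := rfl
  have ht : Ttrans (c j0) (c' j0) := ttrans_at hu hv a j0 rfl hne (fun i hia _ => h i hia)
  refine ⟨fun hcc => ttrans_ne _ _ ht (by rw [hcc]), Or.inr ⟨j0, ht, ?_⟩⟩
  intro j hj
  have hjv : (j : ℕ) ≠ (j0 : ℕ) := fun hh => hj (Fin.ext hh)
  refine (pair_eq hu hv j (fun i hi => h i (fun he => ?_))).symm
  rw [he] at hi
  omega

lemma twoflip {m : ℕ} {c c' : Fin m → Fin 3} {u v : Fin (2 * m) → Fin 2}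
    (hu : Smem c u) (hv : Smem c' v) (a b : Fin (2 * m))
    (hab : a ≠ b) (hua : u a = 0) (hva : v a = 1) (hub : u b = 1) (hvb : v b = 0)
    (heq : ∀ i, i ≠ a → i ≠ b → u i = v i) :
    c ≠ c' ∧ ¬ Disjoint (TBall c) (TBall c') := by
  have habv : (a : ℕ) ≠ (b : ℕ) := fun h => hab (Fin.ext h)
  by_cases hsame : (a : ℕ) / 2 = (b : ℕ) / 2
  · -- same pair
    have haj : (a : ℕ) / 2 < m := by have := a.isLt; omega
    set j0 : Fin m := ⟨(a : ℕ) / 2, haj⟩ with hj0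
    have hval : (j0 : ℕ) = (a : ℕ) / 2 := rfl
    have hcase : ((a : ℕ) = 2 * (j0 : ℕ) ∧ (b : ℕ) = 2 * (j0 : ℕ) + 1) ∨
        ((b : ℕ) = 2 * (j0 : ℕ) ∧ (a : ℕ) = 2 * (j0 : ℕ) + 1) := by omega
    have key3 : Ttrans (c j0) 0 ∧ Ttrans (c' j0) 0 ∧ c j0 ≠ c' j0 := by
      rw [← smem_eq hu j0, ← smem_eq hv j0]
      rcases hcase with ⟨h1, h2⟩ | ⟨h1, h2⟩
      · have e1 : idx1 j0 = a := Fin.ext (by show 2 * (j0 : ℕ) = (a : ℕ); omega)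
        have e2 : idx2 j0 = b := Fin.ext (by show 2 * (j0 : ℕ) + 1 = (b : ℕ); omega)
        rw [e1, e2, hua, hva, hub, hvb]
        unfold Ttrans; decide
      · have e1 : idx1 j0 = b := Fin.ext (by show 2 * (j0 : ℕ) = (b : ℕ); omega)
        have e2 : idx2 j0 = a := Fin.ext (by show 2 * (j0 : ℕ) + 1 = (a : ℕ); omega)
        rw [e1, e2, hua, hva, hub, hvb]
        unfold Ttrans; decide
    have hout : ∀ j, j ≠ j0 → c j = c' j := by
      intro j hj
      have hjv : (j : ℕ) ≠ (j0 : ℕ) := fun hh => hj (Fin.ext hh)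
      refine pair_eq hu hv j (fun i hi => heq i (fun he => ?_) (fun he => ?_)) <;>
        (rw [he] at hi; omega)
    refine ⟨fun h => key3.2.2 (by rw [h]), Set.not_disjoint_iff.mpr
      ⟨Function.update c j0 0, Or.inr ⟨j0, ?_, ?_⟩, Or.inr ⟨j0, ?_, ?_⟩⟩⟩
    · rw [Function.update_self]; exact key3.1
    · intro j hj; exact Function.update_of_ne hj _ _
    · rw [Function.update_self]; exact key3.2.1
    · intro j hj; rw [Function.update_of_ne hj]; exact hout j hj
  · -- different pairs
    have haj : (a : ℕ) / 2 < m := by have := a.isLt; omega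
    have hbj : (b : ℕ) / 2 < m := by have := b.isLt; omega
    set j1 : Fin m := ⟨(a : ℕ) / 2, haj⟩ with hj1
    set j2 : Fin m := ⟨(b : ℕ) / 2, hbj⟩ with hj2
    have hv1 : (j1 : ℕ) = (a : ℕ) / 2 := rfl
    have hv2 : (j2 : ℕ) = (b : ℕ) / 2 := rfl
    have hj12 : j1 ≠ j2 := fun h => hsame (congrArg Fin.val h)
    have hunea : u a ≠ v a := by rw [hua, hva]; decide
    have huneb : u b ≠ v b := by rw [hub, hvb]; decide
    have t1 : Ttrans (c j1) (c' j1) :=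
      ttrans_at hu hv a j1 rfl hunea (fun i hia hi2 => heq i hia (fun he => by
        rw [he] at hi2; omega))
    have t2 : Ttrans (c j2) (c' j2) :=
      ttrans_at hu hv b j2 rfl huneb (fun i hib hi2 => heq i (fun he => by
        rw [he] at hi2; omega) hib)
    have hout : ∀ j, j ≠ j1 → j ≠ j2 → c j = c' j := by
      intro j hja hjb
      have hjv1 : (j : ℕ) ≠ (j1 : ℕ) := fun hh => hja (Fin.ext hh)
      have hjv2 : (j : ℕ) ≠ (j2 : ℕ) := fun hh => hjb (Fin.ext hh)
      refine pair_eq hu hv j (fun i hi => heq i (fun he => ?_) (fun he => ?_)) <;>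
        (rw [he] at hi; omega)
    refine ⟨fun h => ttrans_ne _ _ t1 (by rw [h]), Set.not_disjoint_iff.mpr
      ⟨Function.update c j1 (c' j1), Or.inr ⟨j1, ?_, ?_⟩, Or.inr ⟨j2, ?_, ?_⟩⟩⟩
    · rw [Function.update_self]; exact t1
    · intro j hj; exact Function.update_of_ne hj _ _
    · rw [Function.update_of_ne hj12.symm]; exact ttrans_symm _ _ t2
    · intro j hj
      by_cases hjj : j = j1
      · subst hjj; rw [Function.update_self]
      · rw [Function.update_of_ne hjj]; exact hout j hjj hj

lemma card_facts {m : ℕ} (u v : Fin (2 * m) → Fin 2) (h : Nasym u v ≤ 1) :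
    (Finset.univ.filter (fun i => u i = 0 ∧ v i = 1)) = ∅ ∨
    ∃ a, (Finset.univ.filter (fun i => u i = 0 ∧ v i = 1)) = {a} := by
  rw [Nasym_eq_card] at h
  have h' : (Finset.univ.filter (fun i => u i = 0 ∧ v i = 1)).card ≤ 1 := by exact_mod_cast h
  rcases Finset.eq_empty_or_nonempty (Finset.univ.filter (fun i => u i = 0 ∧ v i = 1)) with
    he | hne
  · exact Or.inl he
  · right
    exact Finset.card_eq_one.mp (le_antisymm h' (Finset.card_pos.mpr hne))

lemma mem_filter_simp {m : ℕ} {u v : Fin (2 * m) → Fin 2} {i : Fin (2 * m)} :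
    i ∈ Finset.univ.filter (fun i => u i = 0 ∧ v i = 1) ↔ (u i = 0 ∧ v i = 1) := by
  simp

lemma key0 {m : ℕ} {c c' : Fin m → Fin 3} {u v : Fin (2 * m) → Fin 2}
    (hu : Smem c u) (hv : Smem c' v)
    (hA : Nasym u v ≤ 1) (hB : Nasym v u ≤ 0) : c' ∈ TBall c := by
  have hBc : (Finset.univ.filter (fun i => v i = 0 ∧ u i = 1)) = ∅ := by
    rw [Nasym_eq_card] at hB
    have : (Finset.univ.filter (fun i => v i = 0 ∧ u i = 1)).card ≤ 0 := by exact_mod_cast hB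
    exact Finset.card_eq_zero.mp (Nat.le_zero.mp this)
  have hQ : ∀ i, ¬(v i = 0 ∧ u i = 1) := by
    intro i hi
    have : i ∈ Finset.univ.filter (fun i => v i = 0 ∧ u i = 1) := mem_filter_simp.mpr hi
    rw [hBc] at this
    exact absurd this (Finset.notMem_empty i)
  rcases card_facts u v hA with he | ⟨a, ha⟩
  · have huv : u = v := by
      funext i
      refine fin2_eq _ _ (fun hi => ?_) (fun hi => hQ i ⟨hi.2, hi.1⟩)
      have : i ∈ Finset.univ.filter (fun i => u i = 0 ∧ v i = 1) := mem_filter_simp.mpr hi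
      rw [he] at this
      exact absurd this (Finset.notMem_empty i)
    left
    funext j
    rw [← smem_eq hu j, ← smem_eq hv j, huv]
  · have hnea : u a ≠ v a := by
      have : a ∈ Finset.univ.filter (fun i => u i = 0 ∧ v i = 1) := by
        rw [ha]; exact Finset.mem_singleton_self a
      rcases mem_filter_simp.mp this with ⟨h1, h2⟩
      rw [h1, h2]; decide
    have hoth : ∀ i, i ≠ a → u i = v i := by
      intro i hia
      refine fin2_eq _ _ (fun hi => ?_) (fun hi => hQ i ⟨hi.2, hi.1⟩)
      have : i ∈ Finset.univ.filter (fun i => u i = 0 ∧ v i = 1) := mem_filter_simp.mpr hi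
      rw [ha] at this
      exact hia (Finset.mem_singleton.mp this)
    exact (oneflip hu hv a hnea hoth).2

lemma key {m : ℕ} {c c' : Fin m → Fin 3} {u v : Fin (2 * m) → Fin 2}
    (hu : Smem c u) (hv : Smem c' v) (hne : u ≠ v)
    (hA : Nasym u v ≤ 1) (hB : Nasym v u ≤ 1) :
    c ≠ c' ∧ ¬ Disjoint (TBall c) (TBall c') := by
  rcases card_facts u v hA with heA | ⟨a, ha⟩ <;>
    rcases card_facts v u hB with heB | ⟨b, hb⟩
  · exfalso
    apply hne
    funext i
    refine fin2_eq _ _ (fun hi => ?_) (fun hi => ?_)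
    · have : i ∈ Finset.univ.filter (fun i => u i = 0 ∧ v i = 1) := mem_filter_simp.mpr hi
      rw [heA] at this; exact absurd this (Finset.notMem_empty i)
    · have : i ∈ Finset.univ.filter (fun i => v i = 0 ∧ u i = 1) :=
        mem_filter_simp.mpr ⟨hi.2, hi.1⟩
      rw [heB] at this; exact absurd this (Finset.notMem_empty i)
  · -- only B: flip at b, from v to u direction
    have hmb : v b = 0 ∧ u b = 1 := by
      have : b ∈ Finset.univ.filter (fun i => v i = 0 ∧ u i = 1) := by
        rw [hb]; exact Finset.mem_singleton_self b
      exact mem_filter_simp.mp this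
    have hneb : u b ≠ v b := by rw [hmb.1, hmb.2]; decide
    have hoth : ∀ i, i ≠ b → u i = v i := by
      intro i hib
      refine fin2_eq _ _ (fun hi => ?_) (fun hi => ?_)
      · have : i ∈ Finset.univ.filter (fun i => u i = 0 ∧ v i = 1) := mem_filter_simp.mpr hi
        rw [heA] at this; exact absurd this (Finset.notMem_empty i)
      · have : i ∈ Finset.univ.filter (fun i => v i = 0 ∧ u i = 1) :=
          mem_filter_simp.mpr ⟨hi.2, hi.1⟩
        rw [hb] at this; exact hib (Finset.mem_singleton.mp this)
    obtain ⟨hcc, hmem⟩ := oneflip hu hv b hneb hoth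
    exact ⟨hcc, fun hd => Set.disjoint_left.mp hd hmem (Or.inl rfl)⟩
  · -- only A
    have hma : u a = 0 ∧ v a = 1 := by
      have : a ∈ Finset.univ.filter (fun i => u i = 0 ∧ v i = 1) := by
        rw [ha]; exact Finset.mem_singleton_self a
      exact mem_filter_simp.mp this
    have hnea : u a ≠ v a := by rw [hma.1, hma.2]; decide
    have hoth : ∀ i, i ≠ a → u i = v i := by
      intro i hia
      refine fin2_eq _ _ (fun hi => ?_) (fun hi => ?_)
      · have : i ∈ Finset.univ.filter (fun i => u i = 0 ∧ v i = 1) := mem_filter_simp.mpr hi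
        rw [ha] at this; exact hia (Finset.mem_singleton.mp this)
      · have : i ∈ Finset.univ.filter (fun i => v i = 0 ∧ u i = 1) :=
          mem_filter_simp.mpr ⟨hi.2, hi.1⟩
        rw [heB] at this; exact absurd this (Finset.notMem_empty i)
    obtain ⟨hcc, hmem⟩ := oneflip hu hv a hnea hoth
    exact ⟨hcc, fun hd => Set.disjoint_left.mp hd hmem (Or.inl rfl)⟩
  · -- both A and B singletons
    have hma : u a = 0 ∧ v a = 1 := by
      have : a ∈ Finset.univ.filter (fun i => u i = 0 ∧ v i = 1) := by
        rw [ha]; exact Finset.mem_singleton_self a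
      exact mem_filter_simp.mp this
    have hmb : v b = 0 ∧ u b = 1 := by
      have : b ∈ Finset.univ.filter (fun i => v i = 0 ∧ u i = 1) := by
        rw [hb]; exact Finset.mem_singleton_self b
      exact mem_filter_simp.mp this
    have hab : a ≠ b := by
      intro h; rw [h] at hma
      rw [hma.1] at hmb; exact absurd hmb.2 (by decide)
    have hoth : ∀ i, i ≠ a → i ≠ b → u i = v i := by
      intro i hia hib
      refine fin2_eq _ _ (fun hi => ?_) (fun hi => ?_)
      · have : i ∈ Finset.univ.filter (fun i => u i = 0 ∧ v i = 1) := mem_filter_simp.mpr hi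
        rw [ha] at this; exact hia (Finset.mem_singleton.mp this)
      · have : i ∈ Finset.univ.filter (fun i => v i = 0 ∧ u i = 1) :=
          mem_filter_simp.mpr ⟨hi.2, hi.1⟩
        rw [hb] at this; exact hib (Finset.mem_singleton.mp this)
    exact twoflip hu hv a b hab hma.1 hma.2 hmb.2 hmb.1 hoth

lemma Nasym_cons {n : ℕ} (b b' : Fin 2) (u v : Fin n → Fin 2) :
    Nasym (Fin.cons b u) (Fin.cons b' v) =
      max (((b' : ℕ) : ℤ) - ((b : ℕ) : ℤ)) 0 + Nasym u v := by
  unfold Nasym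
  rw [Fin.sum_univ_succ]
  simp

/-- If `C'₀, C'₁ ⊆ {0,1,2}^m` are each single-error-correcting for `𝒯`, and no codeword of
one lies in the `𝒯`-ball of a codeword of the other, then
`C = 0·𝔖^m(C'₀) ∪ 1·𝔖^m(C'₁) ⊆ {0,1}^{2m+1}` is a `1`-code of length `2m+1`:
`Δ(x,y) ≥ 2` for all distinct `x, y ∈ C`. -/
theorem extended_ternary_is_one_code (m : ℕ) (C0 C1 : Set (Fin m → Fin 3))
    (h0 : ∀ c ∈ C0, ∀ c' ∈ C0, c ≠ c' → Disjoint (TBall c) (TBall c'))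
    (h1 : ∀ c ∈ C1, ∀ c' ∈ C1, c ≠ c' → Disjoint (TBall c) (TBall c'))
    (hcross : ∀ c0 ∈ C0, ∀ c1 ∈ C1, c1 ∉ TBall c0 ∧ c0 ∉ TBall c1) :
    ∀ x y : Fin (2 * m + 1) → Fin 2,
      ((∃ c ∈ C0, ∃ u : Fin (2 * m) → Fin 2, Smem c u ∧ x = Fin.cons 0 u) ∨
       (∃ c ∈ C1, ∃ u : Fin (2 * m) → Fin 2, Smem c u ∧ x = Fin.cons 1 u)) →
      ((∃ c ∈ C0, ∃ u : Fin (2 * m) → Fin 2, Smem c u ∧ y = Fin.cons 0 u) ∨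
       (∃ c ∈ C1, ∃ u : Fin (2 * m) → Fin 2, Smem c u ∧ y = Fin.cons 1 u)) →
      x ≠ y → 2 ≤ Dasym x y := by
  intro x y hx hy hne
  by_contra hlt
  push_neg at hlt
  have hd1 : Nasym x y ≤ 1 := by
    have := le_max_left (Nasym x y) (Nasym y x)
    unfold Dasym at hlt; omega
  have hd2 : Nasym y x ≤ 1 := by
    have := le_max_right (Nasym x y) (Nasym y x)
    unfold Dasym at hlt; omega
  rcases hx with ⟨c, hc, u, hcu, rfl⟩ | ⟨c, hc, u, hcu, rfl⟩ <;>
    rcases hy with ⟨c', hc', v, hcv, rfl⟩ | ⟨c', hc', v, hcv, rfl⟩ <;>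
    rw [Nasym_cons] at hd1 hd2 <;> norm_num at hd1 hd2
  · -- both bit 0
    have huv : u ≠ v := fun h => hne (by rw [h])
    obtain ⟨hcc, hdd⟩ := key hcu hcv huv hd1 hd2
    exact hdd (h0 c hc c' hc' hcc)
  · -- x bit 0, y bit 1 : c ∈ C0, c' ∈ C1
    have hB : Nasym u v ≤ 0 := by linarith
    exact (hcross c hc c' hc').2 (key0 hcv hcu hd2 hB)
  · -- x bit 1, y bit 0 : c ∈ C1, c' ∈ C0
    have hB : Nasym v u ≤ 0 := by linarith
    exact (hcross c' hc' c hc).2 (key0 hcu hcv hd1 hB)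
  · -- both bit 1
    have huv : u ≠ v := fun h => hne (by rw [h])
    obtain ⟨hcc, hdd⟩ := key hcu hcv huv hd1 hd2
    exact hdd (h1 c hc c' hc' hcc)
end
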